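/- Let γ ∈ (0,1], λ ∈ [−1,1] and ω ∈ ℝ. Let σ be the 6×6 real block-diagonal matrix consisting of three 2×2 blocks [[0,1],[−1,0]] along the diagonal, let B be the 6×6 real matrix written in 2×2 blocks as [[0,0,1₂],[0,0,1₂],[1₂,1₂,0]], and set 𝓛 = (γ−1)·1₆ + 2ω·σ + ((γ−1)λ/√2)·B. Then the symmetric matrix 𝓛 + 𝓛ᵀ is negative semidefinite. -/

import Mathlib

open Matrix

/-- The 6×6 symplectic matrix: three 2×2 blocks `[[0,1],[−1,0]]` along the diagonal. -/
def sigma6 : Matrix (Fin 6) (Fin 6) ℝ :=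
  Matrix.of fun i j =>
    if i.val / 2 = j.val / 2 then
      (if i.val % 2 = 0 ∧ j.val % 2 = 1 then 1
       else if i.val % 2 = 1 ∧ j.val % 2 = 0 then -1 else 0)
    else 0

/-- The 6×6 matrix written in 2×2 blocks as `[[0,0,1₂],[0,0,1₂],[1₂,1₂,0]]`. -/
def B6 : Matrix (Fin 6) (Fin 6) ℝ :=
  Matrix.of fun i j =>
    if ((i.val / 2 < 2 ∧ j.val / 2 = 2) ∨ (i.val / 2 = 2 ∧ j.val / 2 < 2)) ∧
        i.val % 2 = j.val % 2 then 1 else 0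

/-- For the mesoscopic generator `𝓛 = (γ−1)·1₆ + 2ω·σ + ((γ−1)λ/√2)·B`, with
`γ ∈ (0,1]` and `|λ| ≤ 1`, the symmetric matrix `𝓛 + 𝓛ᵀ` is negative semidefinite. -/
theorem generator_dissipativity (γ lam ω : ℝ)
    (hγ : γ ∈ Set.Ioc (0 : ℝ) 1) (hlam : lam ∈ Set.Icc (-1 : ℝ) 1)
    (L : Matrix (Fin 6) (Fin 6) ℝ)
    (hL : L = (γ - 1) • (1 : Matrix (Fin 6) (Fin 6) ℝ) + (2 * ω) • sigma6 +
      ((γ - 1) * lam / Real.sqrt 2) • B6) :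
    (-(L + Lᵀ)).PosSemidef := by

  obtain ⟨hγ0, hγ1⟩ := hγ
  obtain ⟨hl1, hl2⟩ := hlam
  have hs2 : Real.sqrt 2 * Real.sqrt 2 = 2 := Real.mul_self_sqrt (by norm_num)
  have hspos : (0:ℝ) < Real.sqrt 2 := Real.sqrt_pos.mpr (by norm_num)
  rw [Matrix.posSemidef_iff_dotProduct_mulVec]
  constructor
  · have h1 : (L + Lᴴ).IsHermitian := Matrix.isHermitian_add_transpose_self L
    rw [Matrix.conjTranspose_eq_transpose_of_trivial] at h1
    exact h1.neg
  · intro x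
    subst hL
    have h := sq_nonneg (x 0 + x 2 - lam * Real.sqrt 2 * x 4)
    have h2 := sq_nonneg (x 1 + x 3 - lam * Real.sqrt 2 * x 5)
    have h3 := sq_nonneg (x 0 + x 2 + lam * Real.sqrt 2 * x 4)
    have h4 := sq_nonneg (x 1 + x 3 + lam * Real.sqrt 2 * x 5)
    have h5 := sq_nonneg (x 0 - x 2)
    have h6 := sq_nonneg (x 1 - x 3)
    simp (config := { decide := true }) only [RCLike.star_def, dotProduct, Matrix.mulVec, Fin.sum_univ_six,
      Matrix.neg_apply, Matrix.add_apply, Matrix.smul_apply, Matrix.transpose_apply,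
      Matrix.one_apply, sigma6, B6, Matrix.of_apply, starRingEnd_apply, star_trivial]
    norm_num
    have hγ' : (0:ℝ) ≤ 1 - γ := by linarith
    have hl2' : lam * lam ≤ 1 := by nlinarith
    have hinv : (Real.sqrt 2)⁻¹ = Real.sqrt 2 / 2 := by
      field_simp
      rw [Real.sq_sqrt (by norm_num)]
    simp only [div_eq_mul_inv, hinv]
    have e1 : (0:ℝ) ≤ (x 0 + x 2)^2 + 2*Real.sqrt 2*lam*(x 0 + x 2)*(x 4) + 2*lam*lam*(x 4)^2 := by
      have e : (x 0 + x 2 + lam*Real.sqrt 2*x 4)^2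
          = (x 0 + x 2)^2 + 2*Real.sqrt 2*lam*(x 0 + x 2)*(x 4) + 2*lam*lam*(x 4)^2 := by
        linear_combination (lam * x 4)^2 * hs2
      rw [← e]; positivity
    have e2 : (0:ℝ) ≤ (x 1 + x 3)^2 + 2*Real.sqrt 2*lam*(x 1 + x 3)*(x 5) + 2*lam*lam*(x 5)^2 := by
      have e : (x 1 + x 3 + lam*Real.sqrt 2*x 5)^2
          = (x 1 + x 3)^2 + 2*Real.sqrt 2*lam*(x 1 + x 3)*(x 5) + 2*lam*lam*(x 5)^2 := by
        linear_combination (lam * x 5)^2 * hs2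
      rw [← e]; positivity
    have q4 : (0:ℝ) ≤ (1 - lam*lam) * (x 4)^2 := mul_nonneg (by linarith) (sq_nonneg _)
    have q5 : (0:ℝ) ≤ (1 - lam*lam) * (x 5)^2 := mul_nonneg (by linarith) (sq_nonneg _)
    nlinarith [mul_nonneg hγ' e1, mul_nonneg hγ' e2, mul_nonneg hγ' q4, mul_nonneg hγ' q5,
      mul_nonneg hγ' (sq_nonneg (x 0 - x 2)), mul_nonneg hγ' (sq_nonneg (x 1 - x 3))]
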